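/- arXiv:1705.07498 — 3 statements merged into one kernel-verified Lean document; each statement's English description precedes it below -/
import Mathlib

section
/- Let a,b,c,d be integers with (a,b) and (c,d) nonzero and the angles θ₁ = arg(a+ib), θ₂ = arg(c+id) distinct. Then |θ₁ - θ₂| ≥ 1/(√(a²+b²)·√(c²+d²)). -/
open Complex

/-- For nonzero lattice points `(a,b)` and `(c,d)` whose Gaussian integers
`a+ib`, `c+id` have distinct arguments `θ₁ ≠ θ₂`, one has
`|θ₁ - θ₂| ≥ 1/(√(a²+b²)·√(c²+d²))`. -/
theorem stmt_1 (a b c d : ℤ) (hab : (a, b) ≠ (0, 0)) (hcd : (c, d) ≠ (0, 0))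
    (hθ : Complex.arg ((a : ℂ) + (b : ℂ) * Complex.I) ≠
      Complex.arg ((c : ℂ) + (d : ℂ) * Complex.I)) :
    |Complex.arg ((a : ℂ) + (b : ℂ) * Complex.I) -
        Complex.arg ((c : ℂ) + (d : ℂ) * Complex.I)| ≥
      1 / (Real.sqrt ((a : ℝ) ^ 2 + (b : ℝ) ^ 2) * Real.sqrt ((c : ℝ) ^ 2 + (d : ℝ) ^ 2)) := by
  set z : ℂ := (a : ℂ) + (b : ℂ) * Complex.I with hzdef
  set w : ℂ := (c : ℂ) + (d : ℂ) * Complex.I with hwdef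
  have hzre : z.re = (a : ℝ) := by simp [hzdef]
  have hzim : z.im = (b : ℝ) := by simp [hzdef]
  have hwre : w.re = (c : ℝ) := by simp [hwdef]
  have hwim : w.im = (d : ℝ) := by simp [hwdef]
  have hz0 : z ≠ 0 := by
    intro h
    apply hab
    have h1 : (a : ℝ) = 0 := by rw [← hzre, h]; simp
    have h2 : (b : ℝ) = 0 := by rw [← hzim, h]; simp
    exact Prod.ext (by exact_mod_cast h1) (by exact_mod_cast h2)
  have hw0 : w ≠ 0 := by
    intro h
    apply hcd
    have h1 : (c : ℝ) = 0 := by rw [← hwre, h]; simp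
    have h2 : (d : ℝ) = 0 := by rw [← hwim, h]; simp
    exact Prod.ext (by exact_mod_cast h1) (by exact_mod_cast h2)
  have habsz : ‖z‖ = Real.sqrt ((a : ℝ) ^ 2 + (b : ℝ) ^ 2) := by
    rw [Complex.norm_def, Complex.normSq_apply, hzre, hzim]; ring_nf
  have habsw : ‖w‖ = Real.sqrt ((c : ℝ) ^ 2 + (d : ℝ) ^ 2) := by
    rw [Complex.norm_def, Complex.normSq_apply, hwre, hwim]; ring_nf
  -- abs ≥ 1
  have hsum1 : (1 : ℝ) ≤ (a : ℝ) ^ 2 + (b : ℝ) ^ 2 := by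
    have : (1 : ℤ) ≤ a ^ 2 + b ^ 2 := by
      have : a ≠ 0 ∨ b ≠ 0 := by
        by_contra hc; push_neg at hc; exact hab (Prod.ext hc.1 hc.2)
      rcases this with h | h
      · nlinarith [Int.one_le_abs h, _root_.sq_abs a, sq_nonneg b, abs_nonneg a]
      · nlinarith [Int.one_le_abs h, _root_.sq_abs b, sq_nonneg a, abs_nonneg b]
    exact_mod_cast this
  have hsum2 : (1 : ℝ) ≤ (c : ℝ) ^ 2 + (d : ℝ) ^ 2 := by
    have : (1 : ℤ) ≤ c ^ 2 + d ^ 2 := by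
      have : c ≠ 0 ∨ d ≠ 0 := by
        by_contra hc; push_neg at hc; exact hcd (Prod.ext hc.1 hc.2)
      rcases this with h | h
      · nlinarith [Int.one_le_abs h, _root_.sq_abs c, sq_nonneg d, abs_nonneg c]
      · nlinarith [Int.one_le_abs h, _root_.sq_abs d, sq_nonneg c, abs_nonneg d]
    exact_mod_cast this
  have hr1 : (1 : ℝ) ≤ Real.sqrt ((a : ℝ) ^ 2 + (b : ℝ) ^ 2) := by
    rw [show (1:ℝ) = Real.sqrt 1 by simp]
    exact Real.sqrt_le_sqrt hsum1
  have hr2 : (1 : ℝ) ≤ Real.sqrt ((c : ℝ) ^ 2 + (d : ℝ) ^ 2) := by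
    rw [show (1:ℝ) = Real.sqrt 1 by simp]
    exact Real.sqrt_le_sqrt hsum2
  have hr1pos : (0 : ℝ) < Real.sqrt ((a : ℝ) ^ 2 + (b : ℝ) ^ 2) := lt_of_lt_of_le one_pos hr1
  have hr2pos : (0 : ℝ) < Real.sqrt ((c : ℝ) ^ 2 + (d : ℝ) ^ 2) := lt_of_lt_of_le one_pos hr2
  set r1 := Real.sqrt ((a : ℝ) ^ 2 + (b : ℝ) ^ 2)
  set r2 := Real.sqrt ((c : ℝ) ^ 2 + (d : ℝ) ^ 2)
  have hprod : (1 : ℝ) ≤ r1 * r2 := by nlinarith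
  -- sine of the angle difference
  have hsin : Real.sin (z.arg - w.arg) = ((b : ℝ) * c - (a : ℝ) * d) / (r1 * r2) := by
    rw [Real.sin_sub, Complex.sin_arg, Complex.cos_arg hz0, Complex.cos_arg hw0,
      Complex.sin_arg, hzre, hzim, hwre, hwim, habsz, habsw]
    field_simp
    try ring
  by_cases hK : b * c - a * d = 0
  · -- sin = 0, so |θ₁ - θ₂| is a nonzero multiple of π
    have hsin0 : Real.sin (z.arg - w.arg) = 0 := by
      rw [hsin]
      have : ((b : ℝ) * c - (a : ℝ) * d) = 0 := by exact_mod_cast hK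
      rw [this]; simp
    rcases Real.sin_eq_zero_iff.mp hsin0 with ⟨n, hn⟩
    have hne : z.arg - w.arg ≠ 0 := sub_ne_zero.mpr hθ
    have hn0 : n ≠ 0 := by
      intro h; rw [h] at hn; simp at hn; exact hne hn.symm
    have hpi : Real.pi ≤ |z.arg - w.arg| := by
      rw [← hn, abs_mul]
      have : (1 : ℝ) ≤ |(n : ℝ)| := by exact_mod_cast Int.one_le_abs hn0
      calc Real.pi = 1 * Real.pi := (one_mul _).symm
        _ ≤ |(n : ℝ)| * Real.pi := by
            exact mul_le_mul_of_nonneg_right this Real.pi_pos.le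
        _ = |(n : ℝ)| * |Real.pi| := by rw [abs_of_pos Real.pi_pos]
    have h1 : 1 / (r1 * r2) ≤ 1 := by
      rw [div_le_one (lt_of_lt_of_le one_pos hprod)]; exact hprod
    calc 1 / (r1 * r2) ≤ 1 := h1
      _ ≤ Real.pi := by linarith [Real.pi_gt_three]
      _ ≤ |z.arg - w.arg| := hpi
  · -- |bc - ad| ≥ 1
    have hK1 : (1 : ℝ) ≤ |(b : ℝ) * c - (a : ℝ) * d| := by
      have : (1 : ℤ) ≤ |b * c - a * d| := Int.one_le_abs hK
      have h2 : ((1 : ℤ) : ℝ) ≤ (|b * c - a * d| : ℤ) := by exact_mod_cast this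
      push_cast at h2
      convert h2 using 2
    have := Real.abs_sin_le_abs (x := z.arg - w.arg)
    rw [hsin, abs_div, abs_of_pos (mul_pos hr1pos hr2pos)] at this
    have hge : 1 / (r1 * r2) ≤ |(b : ℝ) * c - (a : ℝ) * d| / (r1 * r2) := by
      gcongr
    linarith
end

section
/- There is no Gaussian integer a+ib with a,b > 0, a²+b² ≤ x, and 0 < arctan(b/a) < x^{-1/2}. -/
/-- There is no Gaussian integer `a + ib` with `a, b > 0`, `a² + b² ≤ x`, and
`0 < arctan(b/a) < x^{-1/2}`. -/
theorem stmt_4 (x : ℝ) (hx : 1 ≤ x) (a b : ℕ) (ha : 0 < a) (hb : 0 < b) :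
    ¬ ((a : ℝ) ^ 2 + (b : ℝ) ^ 2 ≤ x ∧ 0 < Real.arctan ((b : ℝ) / a) ∧
      Real.arctan ((b : ℝ) / a) < x ^ (-(1 : ℝ) / 2)) := by
  rintro ⟨hle, hpos, hlt⟩
  have ha' : (0 : ℝ) < a := by exact_mod_cast ha
  have hb' : (1 : ℝ) ≤ b := by exact_mod_cast hb
  have hx0 : (0 : ℝ) < x := lt_of_lt_of_le one_pos hx
  have hs0 : (0 : ℝ) < Real.sqrt ((a : ℝ) ^ 2 + b ^ 2) := by positivity
  -- sin (arctan (b/a)) = b / sqrt (a^2 + b^2)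
  have key : Real.sqrt (1 + ((b : ℝ) / a) ^ 2) * a = Real.sqrt ((a : ℝ) ^ 2 + b ^ 2) := by
    rw [show (a : ℝ) = Real.sqrt ((a : ℝ) ^ 2) by
      rw [Real.sqrt_sq ha'.le], ← Real.sqrt_mul (by positivity)]
    congr 1
    field_simp
    rw [Real.sq_sqrt (by positivity)]
  have hsin : Real.sin (Real.arctan ((b : ℝ) / a)) = b / Real.sqrt ((a : ℝ) ^ 2 + b ^ 2) := by
    rw [Real.sin_arctan, ← key]
    rw [div_div, mul_comm]
  -- 1/√x ≤ b/√(a²+b²)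
  have hsqrt_le : Real.sqrt ((a : ℝ) ^ 2 + b ^ 2) ≤ Real.sqrt x := Real.sqrt_le_sqrt hle
  have h1 : x ^ (-(1 : ℝ) / 2) = 1 / Real.sqrt x := by
    rw [Real.sqrt_eq_rpow, one_div, ← Real.rpow_neg hx0.le]
    norm_num
  have h2 : x ^ (-(1 : ℝ) / 2) ≤ Real.sin (Real.arctan ((b : ℝ) / a)) := by
    rw [h1, hsin]
    exact div_le_div₀ (by positivity) hb' hs0 hsqrt_le
  linarith [Real.sin_lt hpos, h2]
end

section
/- Let q be odd and k ≥ 1. The set S¹_k = {f ∈ (F_q[S]/(S^k))^× : f(0)=1 and f(S)f(−S) = 1 mod S^k} is a subgroup of (F_q[S]/(S^k))^× of order q^⌊k/2⌋. -/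
open Polynomial

set_option maxRecDepth 4000

/-- The Galois-type involution `σ : S ↦ -S` on `F_q[S]/(S^k)`. -/
noncomputable def sigmaMap (Fq : Type) [Field Fq] (k : ℕ) :
    AdjoinRoot (X ^ k : Polynomial Fq) →+* AdjoinRoot (X ^ k : Polynomial Fq) :=
  AdjoinRoot.lift (AdjoinRoot.of _) (-(AdjoinRoot.root _)) (by
    have h : (AdjoinRoot.root (X ^ k : Polynomial Fq)) ^ k = 0 := by
      have := AdjoinRoot.eval₂_root (X ^ k : Polynomial Fq)
      simpa using this
    rw [Polynomial.eval₂_X_pow, neg_pow, h, mul_zero])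

/-- Evaluation at `0` (the constant term), as a ring homomorphism `F_q[S]/(S^k) → F_q`. -/
noncomputable def ev0 (Fq : Type) [Field Fq] (k : ℕ) (hk : k ≠ 0) :
    AdjoinRoot (X ^ k : Polynomial Fq) →+* Fq :=
  AdjoinRoot.lift (RingHom.id Fq) 0 (by rw [Polynomial.eval₂_X_pow, zero_pow hk])

section Aux
variable {R : Type*} [CommRing R]

lemma sqrt_exists_aux (h2 : IsUnit (2 : R)) :
    ∀ j : ℕ, ∀ n : R, n ^ j = 0 → ∃ m : R, n ∣ m ∧ (1 + m) ^ 2 = 1 + n := by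
  intro j
  induction j using Nat.strong_induction_on with
  | _ j ih =>
    match j with
    | 0 =>
      intro n hn
      have h01 : (0 : R) = 1 := by simpa using hn.symm
      haveI := subsingleton_of_zero_eq_one h01
      exact ⟨0, dvd_zero n, Subsingleton.elim _ _⟩
    | 1 =>
      intro n hn
      simp only [pow_one] at hn
      exact ⟨0, dvd_zero n, by simp [hn]⟩
    | (j + 2) =>
      intro n hn
      obtain ⟨u, hu⟩ := h2
      set half : R := ↑u⁻¹ with hhalf
      have h2half : (2 : R) * half = 1 := by rw [← hu, hhalf, Units.mul_inv]
      set m₀ : R := n * half with hm₀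
      have hm₀nil : m₀ ^ (j + 2) = 0 := by
        rw [hm₀, mul_pow, hn, zero_mul]
      have hunit : IsUnit (1 + m₀) := by
        have := IsNilpotent.isUnit_one_add ⟨j + 2, hm₀nil⟩
        simpa [add_comm] using this
      obtain ⟨w, hw⟩ := hunit
      have hsq : (1 + m₀) ^ 2 = 1 + n + n ^ 2 * half ^ 2 := by
        rw [hm₀]
        linear_combination n * h2half
      set v : R := (↑w⁻¹ : R) ^ 2 with hv
      have hvinv : (1 + m₀) ^ 2 * v = 1 := by
        rw [hv, ← mul_pow, ← hw, Units.mul_inv, one_pow]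
      set n' : R := -(n ^ 2 * half ^ 2) * v with hn'
      have hkey : (1 + m₀) ^ 2 * (1 + n') = 1 + n := by
        rw [mul_add, mul_one, hsq, hn']
        rw [show (1 + n + n ^ 2 * half ^ 2) * (-(n ^ 2 * half ^ 2) * v) =
          -(n ^ 2 * half ^ 2) * ((1 + n + n ^ 2 * half ^ 2) * v) by ring]
        rw [← hsq, hvinv]
        linear_combination n * h2half
      have hn'zero : n' ^ (j + 1) = 0 := by
        have h1 : n ^ (2 * (j + 1)) = 0 := by
          have : 2 * (j + 1) = (j + 2) + j := by ring
          rw [this, pow_add, hn, zero_mul]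
        have : n' ^ (j + 1) = n ^ (2 * (j + 1)) * (-(half ^ 2) * v) ^ (j + 1) := by
          rw [hn', pow_mul]; ring_nf
        rw [this, h1, zero_mul]
      obtain ⟨m', hm'dvd, hm'⟩ := ih (j + 1) (by omega) n' hn'zero
      have hndvdn' : n ∣ n' := by
        rw [hn']
        exact Dvd.dvd.mul_right (dvd_neg.mpr (Dvd.dvd.mul_right (dvd_pow_self n two_ne_zero) _)) _
      refine ⟨m₀ + m' + m₀ * m', ?_, ?_⟩
      · refine dvd_add (dvd_add ?_ ?_) ?_
        · exact Dvd.intro _ rfl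
        · exact hndvdn'.trans hm'dvd
        · exact (Dvd.intro _ rfl).mul_right _
      · have : (1 + (m₀ + m' + m₀ * m')) = (1 + m₀) * (1 + m') := by ring
        rw [this, mul_pow, hm', hkey]

lemma sqrt_unique_aux (h2 : IsUnit (2 : R)) {e e' : R}
    (he : IsNilpotent (e - 1)) (he' : IsNilpotent (e' - 1)) (h : e ^ 2 = e' ^ 2) : e = e' := by
  have hnil : IsNilpotent ((e - 1) + (e' - 1)) := (Commute.all _ _).isNilpotent_add he he'
  have hu : IsUnit (e + e') := by
    have := hnil.isUnit_add_right_of_commute h2 (Commute.all _ _)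
    simpa [show (e - 1) + (e' - 1) + 2 = e + e' by ring] using this
  have hz : (e - e') * (e + e') = 0 := by
    have : (e - e') * (e + e') = e ^ 2 - e' ^ 2 := by ring
    rw [this, h, sub_self]
  have h0 : (e + e') * (e - e') = (e + e') * 0 := by rw [mul_comm (e + e'), hz, mul_zero]
  exact sub_eq_zero.mp (hu.mul_left_cancel h0)
end Aux



section Main
variable (Fq : Type) [Field Fq] (k : ℕ)

local notation "R" => AdjoinRoot (X ^ k : Polynomial Fq)

lemma root_pow_k : (AdjoinRoot.root (X ^ k : Polynomial Fq)) ^ k = 0 := by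
  have := AdjoinRoot.eval₂_root (X ^ k : Polynomial Fq)
  simpa using this

lemma aeval_neg_root : aeval (-(AdjoinRoot.root (X ^ k : Polynomial Fq))) (X ^ k : Polynomial Fq) = 0 := by
  rw [map_pow, aeval_X, neg_pow, root_pow_k, mul_zero]

lemma aeval_zero' (hk : k ≠ 0) : aeval (0 : Fq) (X ^ k : Polynomial Fq) = 0 := by
  rw [map_pow, aeval_X, zero_pow hk]

/-- σ as an algebra hom. -/
noncomputable def sigmaAlg : R →ₐ[Fq] R :=
  AdjoinRoot.liftAlgHom _ (Algebra.ofId _ _) (-(AdjoinRoot.root _)) (by rw [eval₂_X_pow, neg_pow, root_pow_k, mul_zero])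

/-- ev0 as an algebra hom. -/
noncomputable def ev0Alg (hk : k ≠ 0) : R →ₐ[Fq] Fq :=
  AdjoinRoot.liftAlgHom _ (Algebra.ofId _ _) 0 (by rw [eval₂_X_pow, zero_pow hk])

lemma sigma_eq_alg : ∀ x : R, sigmaMap Fq k x = sigmaAlg Fq k x := by
  intro x
  obtain ⟨p, rfl⟩ := AdjoinRoot.mk_surjective x
  rw [sigmaMap, AdjoinRoot.lift_mk, sigmaAlg, AdjoinRoot.liftAlgHom_mk]
  rfl

lemma ev0_eq_alg (hk : k ≠ 0) : ∀ x : R, ev0 Fq k hk x = ev0Alg Fq k hk x := by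
  intro x
  obtain ⟨p, rfl⟩ := AdjoinRoot.mk_surjective x
  rw [ev0, AdjoinRoot.lift_mk, ev0Alg, AdjoinRoot.liftAlgHom_mk]
  rfl

lemma sigma_root : sigmaMap Fq k (AdjoinRoot.root _) = -(AdjoinRoot.root _) := by
  rw [sigmaMap]; exact AdjoinRoot.lift_root _

lemma sigma_of (c : Fq) : sigmaMap Fq k (AdjoinRoot.of _ c) = AdjoinRoot.of _ c := by
  rw [sigmaMap]; exact AdjoinRoot.lift_of _

lemma sigma_sigma (x : R) : sigmaMap Fq k (sigmaMap Fq k x) = x := by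
  rw [sigma_eq_alg, sigma_eq_alg]
  have h : (sigmaAlg Fq k).comp (sigmaAlg Fq k) = AlgHom.id Fq R := by
    apply AdjoinRoot.algHom_ext
    simp [sigmaAlg]
  exact AlgHom.congr_fun h x

lemma ev0_root (hk : k ≠ 0) : ev0 Fq k hk (AdjoinRoot.root _) = 0 := by
  rw [ev0]; exact AdjoinRoot.lift_root _

lemma ev0_of (hk : k ≠ 0) (c : Fq) : ev0 Fq k hk (AdjoinRoot.of _ c) = c := by
  rw [ev0]; exact AdjoinRoot.lift_of _

lemma ev0_sigma (hk : k ≠ 0) (x : R) : ev0 Fq k hk (sigmaMap Fq k x) = ev0 Fq k hk x := by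
  rw [sigma_eq_alg, ev0_eq_alg, ev0_eq_alg]
  have h : (ev0Alg Fq k hk).comp (sigmaAlg Fq k) = ev0Alg Fq k hk := by
    apply AdjoinRoot.algHom_ext
    simp [sigmaAlg, ev0Alg]
  exact AlgHom.congr_fun h x

lemma ev0_zero_imp_dvd (hk : k ≠ 0) (x : R) (hx : ev0 Fq k hk x = 0) :
    ∃ y : R, x = AdjoinRoot.root _ * y := by
  obtain ⟨p, rfl⟩ := AdjoinRoot.mk_surjective x
  have : p.coeff 0 = 0 := by
    have h := hx
    rw [ev0, AdjoinRoot.lift_mk] at h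
    rw [Polynomial.eval₂_at_zero] at h
    simpa using h
  obtain ⟨r, hr⟩ := Polynomial.X_dvd_iff.mpr this
  exact ⟨AdjoinRoot.mk _ r, by rw [hr, map_mul, AdjoinRoot.mk_X]⟩

lemma ev0_zero_nilpotent (hk : k ≠ 0) (x : R) (hx : ev0 Fq k hk x = 0) : x ^ k = 0 := by
  obtain ⟨y, rfl⟩ := ev0_zero_imp_dvd Fq k hk x hx
  rw [mul_pow, root_pow_k, zero_mul]

end Main

section Eig
variable (Fq : Type) [Field Fq] (k : ℕ)

local notation "R" => AdjoinRoot (X ^ k : Polynomial Fq)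

/-- The (-1)-eigenspace of σ. -/
noncomputable def EigSub : Submodule Fq R :=
  LinearMap.ker ((sigmaAlg Fq k).toLinearMap + LinearMap.id)

lemma mem_EigSub (x : R) : x ∈ EigSub Fq k ↔ sigmaMap Fq k x = -x := by
  rw [EigSub, LinearMap.mem_ker, LinearMap.add_apply, LinearMap.id_apply,
    AlgHom.toLinearMap_apply, ← sigma_eq_alg]
  constructor
  · intro h; exact eq_neg_of_add_eq_zero_left h
  · intro h; rw [h, neg_add_cancel]

lemma hX_ne : (X ^ k : Polynomial Fq) ≠ 0 := pow_ne_zero _ X_ne_zero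

lemma hdim : (AdjoinRoot.powerBasis (hX_ne Fq k)).dim = k := by
  rw [AdjoinRoot.powerBasis_dim, natDegree_X_pow]

/-- Odd powers of the root. -/
noncomputable def oddFam : Fin (k / 2) → R :=
  fun j => AdjoinRoot.root _ ^ (2 * (j : ℕ) + 1)

noncomputable def oddIdx : Fin (k / 2) → Fin (AdjoinRoot.powerBasis (hX_ne Fq k)).dim :=
  fun j => ⟨2 * (j : ℕ) + 1, by rw [hdim]; omega⟩

lemma basis_oddIdx (j : Fin (k / 2)) :
    (AdjoinRoot.powerBasis (hX_ne Fq k)).basis (oddIdx Fq k j) = oddFam Fq k j := by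
  rw [PowerBasis.basis_eq_pow, AdjoinRoot.powerBasis_gen]
  rfl

lemma oddFam_li : LinearIndependent Fq (oddFam Fq k) := by
  have h : oddFam Fq k = (AdjoinRoot.powerBasis (hX_ne Fq k)).basis ∘ oddIdx Fq k := by
    funext j; rw [Function.comp_apply, basis_oddIdx]
  rw [h]
  exact (AdjoinRoot.powerBasis (hX_ne Fq k)).basis.linearIndependent.comp _ (by
    intro a b hab
    simp only [oddIdx, Fin.mk.injEq] at hab
    exact Fin.ext (by omega))

lemma eig_eq_span (h2 : (2 : Fq) ≠ 0) :
    EigSub Fq k = Submodule.span Fq (Set.range (oddFam Fq k)) := by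
  set b := AdjoinRoot.powerBasis (hX_ne Fq k) with hb
  apply le_antisymm
  · intro x hx
    set c := b.basis.repr x with hcdef
    have hxsum : ∑ i, c i • b.basis i = x := b.basis.sum_repr x
    have hσ : sigmaMap Fq k x = ∑ i : Fin b.dim, ((-1 : Fq) ^ (i : ℕ) * c i) • b.basis i := by
      rw [sigma_eq_alg, ← hxsum, map_sum]
      refine Finset.sum_congr rfl fun i _ => ?_
      rw [map_smul, b.basis_eq_pow i]
      have hgenr : b.gen = AdjoinRoot.root _ := AdjoinRoot.powerBasis_gen _
      have hgen : sigmaAlg Fq k (b.gen ^ (i : ℕ)) = (-b.gen) ^ (i : ℕ) := by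
        rw [map_pow]
        congr 1
        rw [hgenr, ← sigma_eq_alg, sigma_root]
      rw [hgen, neg_pow, Algebra.smul_def, Algebra.smul_def, map_mul, map_pow, map_neg, map_one]
      ring
    have hc : ∀ i : Fin b.dim, (-1 : Fq) ^ (i : ℕ) * c i = -c i := by
      have hneg : ∑ i : Fin b.dim, ((-1 : Fq) ^ (i : ℕ) * c i) • b.basis i
          = ∑ i : Fin b.dim, (-c i) • b.basis i := by
        calc ∑ i : Fin b.dim, ((-1 : Fq) ^ (i : ℕ) * c i) • b.basis i
            = sigmaMap Fq k x := hσ.symm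
          _ = -x := (mem_EigSub Fq k x).mp hx
          _ = -∑ i : Fin b.dim, c i • b.basis i := by rw [hxsum]
          _ = ∑ i : Fin b.dim, (-c i) • b.basis i := by
              rw [← Finset.sum_neg_distrib]
              exact Finset.sum_congr rfl fun i _ => (neg_smul _ _).symm
      have hL := b.basis.repr_sum_self (fun i => (-1 : Fq) ^ (i : ℕ) * c i)
      have hR := b.basis.repr_sum_self (fun i => -c i)
      have hfun : (fun i : Fin b.dim => (-1 : Fq) ^ (i : ℕ) * c i) = fun i => -c i := by
        rw [← hL, ← hR]
        exact congrArg (fun g => ⇑(b.basis.repr g)) hneg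
      exact fun i => congrFun hfun i
    have heven : ∀ i : Fin b.dim, Even (i : ℕ) → c i = 0 := by
      intro i hi
      have h1 := hc i
      rw [hi.neg_one_pow, one_mul] at h1
      have h2' : (2 : Fq) * c i = 0 := by linear_combination h1
      rcases mul_eq_zero.mp h2' with h | h
      · exact absurd h h2
      · exact h
    rw [← hxsum]
    apply Submodule.sum_mem
    intro i _
    by_cases hi : Even (i : ℕ)
    · rw [heven i hi, zero_smul]; exact Submodule.zero_mem _
    · apply Submodule.smul_mem
      apply Submodule.subset_span
      have hodd : (i : ℕ) % 2 = 1 := Nat.odd_iff.mp (Nat.not_even_iff_odd.mp hi)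
      have hlt : (i : ℕ) < k := by
        have h1 := i.isLt
        have h2'' := hdim Fq k
        rw [← hb] at h2''
        omega
      have hj : (i : ℕ) / 2 < k / 2 := by omega
      refine ⟨⟨(i : ℕ) / 2, hj⟩, ?_⟩
      show AdjoinRoot.root _ ^ (2 * ((i : ℕ) / 2) + 1) = b.basis i
      rw [b.basis_eq_pow i]
      have hgenr : b.gen = AdjoinRoot.root _ := AdjoinRoot.powerBasis_gen _
      rw [hgenr]
      congr 1
      omega
  · rw [Submodule.span_le]
    rintro _ ⟨j, rfl⟩
    rw [SetLike.mem_coe, mem_EigSub, oddFam, map_pow, sigma_root]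
    exact Odd.neg_pow ⟨j, by ring⟩ _

end Eig

section Card
variable (Fq : Type) [Field Fq] [Fintype Fq] (k : ℕ)

lemma card_Eig (h2 : (2 : Fq) ≠ 0) :
    Nat.card (EigSub Fq k) = Fintype.card Fq ^ (k / 2) := by
  have hli := oddFam_li Fq k
  have e1 : (EigSub Fq k) ≃ₗ[Fq] Submodule.span Fq (Set.range (oddFam Fq k)) :=
    LinearEquiv.ofEq _ _ (eig_eq_span Fq k h2)
  have e2 := (Module.Basis.span hli).equivFun
  have h3 : Nat.card (EigSub Fq k) = Nat.card (Fin (k / 2) → Fq) :=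
    Nat.card_congr (e1.trans e2).toEquiv
  rw [h3, Nat.card_fun, Nat.card_eq_fintype_card, Nat.card_eq_fintype_card, Fintype.card_fin]

lemma two_ne_zero_of_odd_card (hq : Odd (Fintype.card Fq)) : (2 : Fq) ≠ 0 := by
  intro h
  have hdvd : ringChar Fq ∣ 2 := ringChar.dvd (by exact_mod_cast h)
  have hchar : ringChar Fq = 2 :=
    ((Nat.dvd_prime Nat.prime_two).mp hdvd).resolve_left CharP.ringChar_ne_one
  have heven := FiniteField.even_card_of_char_two hchar
  rw [Nat.odd_iff] at hq
  omega

end Card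

/-- For `q` odd and `k ≥ 1`, the set
`S¹_k = {f ∈ (F_q[S]/(S^k))^× : f(0) = 1, f(S)·f(−S) = 1}` is a subgroup of
`(F_q[S]/(S^k))^×` of order `q^⌊k/2⌋`. -/
theorem stmt_5 (Fq : Type) [Field Fq] [Fintype Fq] (hq : Odd (Fintype.card Fq))
    (k : ℕ) (hk : 1 ≤ k) :
    ∃ H : Subgroup (AdjoinRoot (X ^ k : Polynomial Fq))ˣ,
      (∀ f : (AdjoinRoot (X ^ k : Polynomial Fq))ˣ,
        f ∈ H ↔
          ev0 Fq k (Nat.one_le_iff_ne_zero.mp hk) (f : AdjoinRoot (X ^ k : Polynomial Fq)) = 1 ∧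
          (f : AdjoinRoot (X ^ k : Polynomial Fq)) *
            sigmaMap Fq k (f : AdjoinRoot (X ^ k : Polynomial Fq)) = 1) ∧
      Nat.card H = Fintype.card Fq ^ (k / 2) := by
  classical
  have hk0 : k ≠ 0 := Nat.one_le_iff_ne_zero.mp hk
  have h2F : (2 : Fq) ≠ 0 := two_ne_zero_of_odd_card Fq hq
  set R' := AdjoinRoot (X ^ k : Polynomial Fq) with hR'
  set σ := sigmaMap Fq k with hσdef
  set ε := ev0 Fq k hk0 with hεdef
  set half : R' := AdjoinRoot.of _ ((2 : Fq)⁻¹) with hhalf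
  have h2half : (2 : R') * half = 1 := by
    rw [hhalf, show (2 : R') = AdjoinRoot.of _ (2 : Fq) from (map_ofNat _ 2).symm,
      ← map_mul, mul_inv_cancel₀ h2F, map_one]
  have h2R : IsUnit (2 : R') := IsUnit.of_mul_eq_one half h2half
  have hσhalf : σ half = half := sigma_of Fq k _
  have hεhalf : ε half = (2 : Fq)⁻¹ := ev0_of Fq k hk0 _
  refine ⟨{
    carrier := {f : R'ˣ | ε (f : R') = 1 ∧ (f : R') * σ (f : R') = 1}
    mul_mem' := by
      rintro a b ⟨ha1, ha2⟩ ⟨hb1, hb2⟩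
      constructor
      · rw [Units.val_mul, map_mul, ha1, hb1, mul_one]
      · rw [Units.val_mul, map_mul]
        calc (a : R') * b * (σ (a : R') * σ (b : R'))
            = ((a : R') * σ (a : R')) * ((b : R') * σ (b : R')) := by ring
          _ = 1 := by rw [ha2, hb2, mul_one]
    one_mem' := by
      constructor
      · rw [Units.val_one, map_one]
      · rw [Units.val_one, map_one, mul_one]
    inv_mem' := by
      rintro a ⟨ha1, ha2⟩
      constructor
      · have h := ha1
        have h2 : ε ((a : R') * (↑a⁻¹ : R')) = 1 := by rw [Units.mul_inv, map_one]
        rw [map_mul, ha1, one_mul] at h2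
        exact h2
      · have key : ((a : R') * σ (a : R')) * ((↑a⁻¹ : R') * σ (↑a⁻¹ : R')) = 1 := by
          calc ((a : R') * σ (a : R')) * ((↑a⁻¹ : R') * σ (↑a⁻¹ : R'))
              = ((a : R') * (↑a⁻¹ : R')) * σ ((a : R') * (↑a⁻¹ : R')) := by
                rw [map_mul]; ring
            _ = 1 := by rw [Units.mul_inv, map_one, mul_one]
        rwa [ha2, one_mul] at key
  }, fun f => Iff.rfl, ?_⟩
  -- cardinality
  have hnil : ∀ x : R', ε x = 0 → IsNilpotent x := fun x hx =>
    ⟨k, ev0_zero_nilpotent Fq k hk0 x hx⟩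
  have key_id : ∀ x : R', ((x + σ x) * half) ^ 2 = x * σ x + ((x - σ x) * half) ^ 2 := by
    intro x
    linear_combination (x * σ x * (2 * half + 1)) * h2half
  -- the bijection with the (-1)-eigenspace of σ
  have hmemEig : ∀ f : {f : R'ˣ // ε (f : R') = 1 ∧ (f : R') * σ (f : R') = 1},
      ((f : R'ˣ) : R') * half - σ ((f : R'ˣ) : R') * half ∈ EigSub Fq k := by
    intro f
    rw [mem_EigSub, map_sub, map_mul, map_mul, sigma_sigma, hσhalf]
    ring
  set φ : {f : R'ˣ // ε (f : R') = 1 ∧ (f : R') * σ (f : R') = 1} → (EigSub Fq k) :=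
    fun f => ⟨((f : R'ˣ) : R') * half - σ ((f : R'ˣ) : R') * half, hmemEig f⟩ with hφdef
  have hinj : Function.Injective φ := by
    intro f g hfg
    obtain ⟨hf1, hf2⟩ := f.2
    obtain ⟨hg1, hg2⟩ := g.2
    have hO := congrArg Subtype.val hfg
    simp only [hφdef] at hO
    set x : R' := ((f : R'ˣ) : R') with hx
    set y : R' := ((g : R'ˣ) : R') with hy
    have hEf : ((x + σ x) * half) ^ 2 = 1 + ((x - σ x) * half) ^ 2 := by
      rw [key_id, hf2]
    have hEg : ((y + σ y) * half) ^ 2 = 1 + ((y - σ y) * half) ^ 2 := by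
      rw [key_id, hg2]
    have hOeq : (x - σ x) * half = (y - σ y) * half := by
      rw [sub_mul, sub_mul]
      exact hO
    have hEeq : ((x + σ x) * half) ^ 2 = ((y + σ y) * half) ^ 2 := by
      rw [hEf, hEg, hOeq]
    have hnilf : IsNilpotent ((x + σ x) * half - 1) := by
      apply hnil
      rw [map_sub, map_mul, map_add, ev0_sigma, map_one]
      rw [← hεdef, hf1, hεhalf]
      rw [show (1 : Fq) + 1 = 2 from by norm_num, mul_inv_cancel₀ h2F, sub_self]
    have hnilg : IsNilpotent ((y + σ y) * half - 1) := by
      apply hnil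
      rw [map_sub, map_mul, map_add, ev0_sigma, map_one]
      rw [← hεdef, hg1, hεhalf]
      rw [show (1 : Fq) + 1 = 2 from by norm_num, mul_inv_cancel₀ h2F, sub_self]
    have hE : (x + σ x) * half = (y + σ y) * half := sqrt_unique_aux h2R hnilf hnilg hEeq
    have hxy : x = y := by
      have h1 : x * (2 * half) = y * (2 * half) := by
        calc x * (2 * half) = (x + σ x) * half + (x - σ x) * half := by ring
          _ = (y + σ y) * half + (y - σ y) * half := by rw [hE, hOeq]
          _ = y * (2 * half) := by ring
      rwa [h2half, mul_one, mul_one] at h1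
    exact Subtype.ext (Units.ext hxy)
  have hsurj : Function.Surjective φ := by
    rintro ⟨O, hO⟩
    rw [mem_EigSub] at hO
    have hεO : ε O = 0 := by
      have h1 : ε (σ O) = ε O := ev0_sigma Fq k hk0 O
      rw [hO, map_neg] at h1
      have h2 : (2 : Fq) * ε O = 0 := by linear_combination -h1
      exact (mul_eq_zero.mp h2).resolve_left h2F
    have hOk : O ^ k = 0 := ev0_zero_nilpotent Fq k hk0 O hεO
    have hO2k : (O ^ 2) ^ k = 0 := by
      rw [← pow_mul, mul_comm, pow_mul, hOk, zero_pow (two_ne_zero)]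
    obtain ⟨m, hmdvd, hm⟩ := sqrt_exists_aux h2R k (O ^ 2) hO2k
    obtain ⟨c, rfl⟩ := hmdvd
    have hεm : ε (O ^ 2 * c) = 0 := by
      rw [map_mul, map_pow, hεO, zero_pow (two_ne_zero), zero_mul]
    have hmnil : IsNilpotent (O ^ 2 * c) := hnil _ hεm
    have hσE : σ (1 + O ^ 2 * c) = 1 + O ^ 2 * c := by
      apply sqrt_unique_aux h2R
      · have h1 : σ (1 + O ^ 2 * c) - 1 = σ (O ^ 2 * c) := by
          rw [map_add, map_one]; ring
        rw [h1]
        exact hmnil.map σ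
      · have h1 : (1 + O ^ 2 * c) - 1 = O ^ 2 * c := by ring
        rw [h1]; exact hmnil
      · calc (σ (1 + O ^ 2 * c)) ^ 2 = σ ((1 + O ^ 2 * c) ^ 2) := (map_pow σ _ 2).symm
          _ = σ (1 + O ^ 2) := by rw [hm]
          _ = 1 + (σ O) ^ 2 := by rw [map_add, map_one, map_pow]
          _ = 1 + O ^ 2 := by rw [hO, neg_sq]
          _ = (1 + O ^ 2 * c) ^ 2 := hm.symm
    have hσf0 : σ ((1 + O ^ 2 * c) + O) = (1 + O ^ 2 * c) - O := by
      rw [map_add, hσE, hO]; ring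
    have hprod : ((1 + O ^ 2 * c) + O) * σ ((1 + O ^ 2 * c) + O) = 1 := by
      rw [hσf0]; linear_combination hm
    have hε0 : ε ((1 + O ^ 2 * c) + O) = 1 := by
      rw [map_add, map_add, map_one, hεm, hεO]; ring
    refine ⟨⟨Units.mkOfMulEqOne _ (σ ((1 + O ^ 2 * c) + O)) hprod, hε0, hprod⟩, ?_⟩
    apply Subtype.ext
    show (((1 + O ^ 2 * c) + O) * half - σ ((1 + O ^ 2 * c) + O) * half) = O
    rw [hσf0]
    have h1 : ((1 + O ^ 2 * c) + O) * half - ((1 + O ^ 2 * c) - O) * half = O * (2 * half) := by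
      ring
    rw [h1, h2half, mul_one]
  have hcard : Nat.card {f : R'ˣ // ε (f : R') = 1 ∧ (f : R') * σ (f : R') = 1}
      = Nat.card (EigSub Fq k) := Nat.card_eq_of_bijective φ ⟨hinj, hsurj⟩
  show Nat.card {f : R'ˣ // ε (f : R') = 1 ∧ (f : R') * σ (f : R') = 1} = _
  rw [hcard, card_Eig Fq k h2F]
end
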